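/- Let G be a connected graph with principal eigenvector X (the positive unit eigenvector for ρ(G)), let u, v be vertices, and let v₁, …, v_s be neighbors of v that are not in the closed neighborhood of u. Set G* = G − {vv₁,…,vv_s} + {uv₁,…,uv_s}. If x_u ≥ x_v, then ρ(G) < ρ(G*). -/

import Mathlib

open SimpleGraph

/-- `H` is a minor of `G`: there are nonempty pairwise-disjoint connected branch sets
in `G`, one for each vertex of `H`, with an edge of `G` between the branch sets of any
two adjacent vertices of `H`. -/
def SimpleGraph.IsMinorOf {β V : Type*} (H : SimpleGraph β) (G : SimpleGraph V) : Prop :=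
  ∃ f : β → Set V,
    (∀ b, (f b).Nonempty) ∧
    (Pairwise fun b₁ b₂ => Disjoint (f b₁) (f b₂)) ∧
    (∀ b, (G.induce (f b)).Connected) ∧
    (∀ b₁ b₂, H.Adj b₁ b₂ → ∃ a₁ ∈ f b₁, ∃ a₂ ∈ f b₂, G.Adj a₁ a₂)

/-- A graph is outerplanar iff it has no `K₄` minor and no `K_{2,3}` minor. -/
def SimpleGraph.Outerplanar {V : Type*} (G : SimpleGraph V) : Prop :=
  ¬ (completeGraph (Fin 4)).IsMinorOf G ∧
  ¬ (completeBipartiteGraph (Fin 2) (Fin 3)).IsMinorOf G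

/-- The graph obtained from `G` by adding the edge `uv`. -/
def SimpleGraph.addEdge {V : Type*} (G : SimpleGraph V) (u v : V) : SimpleGraph V :=
  G ⊔ SimpleGraph.fromEdgeSet {s(u, v)}

/-- An (edge-)maximal bipartite outerplanar graph: bipartite and outerplanar, and adding any
new edge between distinct non-adjacent vertices destroys outerplanarity or bipartiteness. -/
def SimpleGraph.MaxBipOuterplanar {V : Type*} (G : SimpleGraph V) : Prop :=
  G.Outerplanar ∧ G.Colorable 2 ∧
    ∀ u v : V, u ≠ v → ¬ G.Adj u v →
      ¬ ((G.addEdge u v).Outerplanar ∧ (G.addEdge u v).Colorable 2)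

/-- A graph on at least 3 vertices is 2-connected if it is connected and remains
connected after deleting any single vertex. -/
def SimpleGraph.TwoConnected {V : Type*} [Fintype V] (G : SimpleGraph V) : Prop :=
  3 ≤ Fintype.card V ∧ G.Connected ∧
    ∀ v : V, (((⊤ : G.Subgraph).deleteVerts {v}).coe).Connected

/-- The spectral radius of a graph: the largest (real) eigenvalue of its adjacency matrix. -/
noncomputable def SimpleGraph.specRad {V : Type*} [Fintype V] (G : SimpleGraph V) : ℝ := by
  classical exact sSup (spectrum ℝ (G.adjMatrix ℝ))

/-- The least eigenvalue of a graph: the smallest (real) eigenvalue of its adjacency matrix. -/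
noncomputable def SimpleGraph.leastEig {V : Type*} [Fintype V] (G : SimpleGraph V) : ℝ := by
  classical exact sInf (spectrum ℝ (G.adjMatrix ℝ))

/-- The star on `n` vertices: vertex `0` adjacent to all others. -/
def starGraph (n : ℕ) : SimpleGraph (Fin n) where
  Adj i j := i ≠ j ∧ (i.val = 0 ∨ j.val = 0)
  symm := by constructor; intro i j h; exact ⟨h.1.symm, h.2.symm⟩
  loopless := by constructor; intro i h; exact h.1 rfl

/-- The spectral radius of a real square matrix: the supremum of the moduli of its
complex eigenvalues. -/
noncomputable def matSpecRad {n : ℕ} (A : Matrix (Fin n) (Fin n) ℝ) : ℝ :=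
  sSup ((‖·‖) '' spectrum ℂ (A.map Complex.ofReal))

/-- Irreducibility of a nonnegative matrix: for all `i j` some power has positive `(i,j)` entry. -/
def MatIrreducible {n : ℕ} (A : Matrix (Fin n) (Fin n) ℝ) : Prop :=
  ∀ i j, ∃ k : ℕ, 0 < (A ^ k) i j

/-- A combinatorial plane embedding of a (connected) graph `G`: a family of closed walks
(face boundaries) such that every edge of `G` lies on exactly two face sides, together
with Euler's formula. -/
structure PlaneEmbedding {V : Type*} [Fintype V] [DecidableEq V]
    (G : SimpleGraph V) [DecidableRel G.Adj] where
  numFaces : ℕ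
  base : Fin numFaces → V
  boundary : (f : Fin numFaces) → G.Walk (base f) (base f)
  edge_twice : ∀ e ∈ G.edgeSet, (∑ f : Fin numFaces, ((boundary f).edges.count e)) = 2
  euler : (Fintype.card V : ℤ) + numFaces - G.edgeFinset.card = 2

/-- An outerplane embedding: a plane embedding with a distinguished (outer) face whose
boundary passes through every vertex of `G`. -/
structure OuterplaneEmbedding {V : Type*} [Fintype V] [DecidableEq V]
    (G : SimpleGraph V) [DecidableRel G.Adj] extends PlaneEmbedding G where
  outer : Fin numFaces
  outer_all : ∀ v : V, v ∈ (boundary outer).support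

open Matrix Pointwise in
private lemma myRayleigh {n : Type*} [Fintype n] [DecidableEq n] [Nonempty n]
    {A : Matrix n n ℝ} (hA : A.IsHermitian) (x : n → ℝ) (hx : ∑ w, x w ^ 2 = 1) :
    x ⬝ᵥ A *ᵥ x ≤ sSup (spectrum ℝ A) ∧
      (x ⬝ᵥ A *ᵥ x = sSup (spectrum ℝ A) → A *ᵥ x = sSup (spectrum ℝ A) • x) := by
  set μ := sSup (spectrum ℝ A) with hμ
  have hfin : (spectrum ℝ A).Finite := A.finite_real_spectrum
  have hbdd : BddAbove (spectrum ℝ A) := hfin.bddAbove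
  have hle : ∀ t ∈ spectrum ℝ A, t ≤ μ := fun t ht => le_csSup hbdd ht
  set M : Matrix n n ℝ := μ • (1 : Matrix n n ℝ) - A with hM
  have halg : M = (algebraMap ℝ (Matrix n n ℝ)) μ - A := by
    rw [hM, Algebra.algebraMap_eq_smul_one]
  have hermM : M.IsHermitian := by
    rw [Matrix.IsHermitian, hM, Matrix.conjTranspose_sub, Matrix.conjTranspose_smul, hA.eq]
    simp
  have hspecM : spectrum ℝ M = ({μ} : Set ℝ) - spectrum ℝ A := by
    rw [halg]; exact (spectrum.singleton_sub_eq A μ).symm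
  have heignn : ∀ i, 0 ≤ hermM.eigenvalues i := by
    intro i
    have h1 := hermM.eigenvalues_mem_spectrum_real i
    rw [hspecM, Set.mem_sub] at h1
    obtain ⟨a, ha, b, hb, hab⟩ := h1
    rw [Set.mem_singleton_iff] at ha
    subst ha
    linarith [hle b hb]
  have hpsd : M.PosSemidef := hermM.posSemidef_iff_eigenvalues_nonneg.mpr heignn
  have hxx : x ⬝ᵥ x = 1 := by simpa [dotProduct, sq] using hx
  have hMx : M *ᵥ x = μ • x - A *ᵥ x := by
    rw [hM, Matrix.sub_mulVec, Matrix.smul_mulVec, Matrix.one_mulVec]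
  have hquad : x ⬝ᵥ M *ᵥ x = μ - x ⬝ᵥ A *ᵥ x := by
    rw [hMx, dotProduct_sub, dotProduct_smul, smul_eq_mul, hxx, mul_one]
  have h0 : 0 ≤ x ⬝ᵥ M *ᵥ x := by simpa using hpsd.dotProduct_mulVec_nonneg x
  constructor
  · linarith [hquad ▸ h0]
  · intro heq
    have hz : star x ⬝ᵥ M *ᵥ x = 0 := by
      simp [hquad, heq]
    have := (hpsd.dotProduct_mulVec_zero_iff x).mp hz
    rw [hMx, sub_eq_zero] at this
    exact this.symm

private lemma mySpecRadEq {V : Type*} [Fintype V] [DecidableEq V] (H : SimpleGraph V)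
    [inst : DecidableRel H.Adj] :
    H.specRad = sSup (spectrum ℝ (H.adjMatrix ℝ)) := by
  unfold SimpleGraph.specRad
  congr!

open Matrix Pointwise in
theorem stmt17 {V : Type*} [Fintype V] [DecidableEq V]
    (G : SimpleGraph V) [DecidableRel G.Adj] (hG : G.Connected)
    (X : V → ℝ) (hpos : ∀ w, 0 < X w) (hunit : ∑ w : V, X w ^ 2 = 1)
    (heig : (G.adjMatrix ℝ).mulVec X = G.specRad • X)
    (u v : V) (s : ℕ) (hs : 1 ≤ s) (vs : Fin s → V) (hinj : Function.Injective vs)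
    (hadj : ∀ i, G.Adj v (vs i))
    (hnbr : ∀ i, vs i ≠ u ∧ ¬ G.Adj u (vs i))
    (hxy : X v ≤ X u) :
    G.specRad <
      ((G.deleteEdges {e | ∃ i, e = s(v, vs i)}) ⊔
        SimpleGraph.fromEdgeSet {e | ∃ i, e = s(u, vs i)}).specRad := by
  classical
  have hne : Nonempty V := hG.nonempty
  set Gs := ((G.deleteEdges {e | ∃ i, e = s(v, vs i)}) ⊔
        SimpleGraph.fromEdgeSet {e | ∃ i, e = s(u, vs i)}) with hGs
  have i0 : Fin s := ⟨0, hs⟩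
  have hvne : ∀ i, v ≠ vs i := fun i => (hadj i).ne
  have hune : ∀ i, u ≠ vs i := fun i => (hnbr i).1.symm
  have huv : u ≠ v := fun h => (hnbr i0).2 (by rw [h]; exact hadj i0)
  set A : Matrix V V ℝ := G.adjMatrix ℝ with hA
  set B : Matrix V V ℝ := Gs.adjMatrix ℝ with hB
  set Q : Matrix V V ℝ :=
    Matrix.of (fun a b => if ∃ i, s(a, b) = s(u, vs i) then (1 : ℝ) else 0) with hQ
  set P : Matrix V V ℝ :=
    Matrix.of (fun a b => if ∃ i, s(a, b) = s(v, vs i) then (1 : ℝ) else 0) with hP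
  -- the matrix identity
  have hnotboth : ∀ a b : V, (∃ i, s(a, b) = s(u, vs i)) → ¬ (∃ j, s(a, b) = s(v, vs j)) := by
    rintro a b ⟨i, hi⟩ ⟨j, hj⟩
    have h := hi.symm.trans hj
    rw [Sym2.eq_iff] at h
    rcases h with ⟨h1, _⟩ | ⟨h1, _⟩
    · exact huv h1
    · exact hune j h1
  have hBmat : B = A + Q - P := by
    ext a b
    simp only [Matrix.add_apply, Matrix.sub_apply, hQ, hP, Matrix.of_apply]
    rw [hB, hA]
    simp only [SimpleGraph.adjMatrix_apply]
    by_cases hq : ∃ i, s(a, b) = s(u, vs i)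
    · have hp := hnotboth a b hq
      obtain ⟨i, hi0⟩ := id hq
      have hi := Sym2.eq_iff.mp hi0
      have hab : a ≠ b := by
        rcases hi with ⟨rfl, rfl⟩ | ⟨rfl, rfl⟩
        · exact hune i
        · exact (hune i).symm
      have hGadj : ¬ G.Adj a b := by
        rcases hi with ⟨rfl, rfl⟩ | ⟨rfl, rfl⟩
        · exact (hnbr i).2
        · exact fun h => (hnbr i).2 h.symm
      have hGsadj : Gs.Adj a b := by
        rw [hGs, SimpleGraph.sup_adj, SimpleGraph.fromEdgeSet_adj]
        exact Or.inr ⟨hq, hab⟩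
      rw [if_pos hGsadj, if_neg hGadj, if_pos hq, if_neg hp]
      ring
    · by_cases hp : ∃ i, s(a, b) = s(v, vs i)
      · obtain ⟨i, hi0⟩ := id hp
        have hi := Sym2.eq_iff.mp hi0
        have hGadj : G.Adj a b := by
          rcases hi with ⟨rfl, rfl⟩ | ⟨rfl, rfl⟩
          · exact hadj i
          · exact (hadj i).symm
        have hGsadj : ¬ Gs.Adj a b := by
          rw [hGs, SimpleGraph.sup_adj, SimpleGraph.deleteEdges_adj,
            SimpleGraph.fromEdgeSet_adj]
          rintro (⟨-, hmem⟩ | ⟨hmem, -⟩)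
          · exact hmem hp
          · exact hq hmem
        rw [if_pos hGadj, if_neg hGsadj, if_neg hq, if_pos hp]
        ring
      · have hiff : Gs.Adj a b ↔ G.Adj a b := by
          rw [hGs, SimpleGraph.sup_adj, SimpleGraph.deleteEdges_adj,
            SimpleGraph.fromEdgeSet_adj]
          constructor
          · rintro (⟨h, -⟩ | ⟨hmem, -⟩)
            · exact h
            · exact absurd hmem hq
          · intro h
            exact Or.inl ⟨h, hp⟩
        rw [if_neg hq, if_neg hp, if_congr hiff rfl rfl]
        ring
  -- expansion of quadratic forms
  have hexp : ∀ M : Matrix V V ℝ, X ⬝ᵥ (M *ᵥ X) = ∑ a, ∑ b, X a * (M a b * X b) := by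
    intro M
    simp [dotProduct, Matrix.mulVec, Finset.mul_sum]
  have hdouble : ∀ c d : V,
      (∑ a, ∑ b, X a * ((if a = c ∧ b = d then (1:ℝ) else 0) * X b)) = X c * X d := by
    intro c d
    rw [Finset.sum_eq_single c]
    · rw [Finset.sum_eq_single d]
      · simp
      · intro b _ hb; simp [hb]
      · intro h; exact absurd (Finset.mem_univ d) h
    · intro a _ ha
      apply Finset.sum_eq_zero
      intro b _
      simp [ha]
    · intro h; exact absurd (Finset.mem_univ c) h
  have hindsum : ∀ (w : V), (∀ i, w ≠ vs i) → ∀ a b : V,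
      (if ∃ i, s(a, b) = s(w, vs i) then (1:ℝ) else 0) =
        ∑ i, ((if a = w ∧ b = vs i then (1:ℝ) else 0) +
          (if a = vs i ∧ b = w then (1:ℝ) else 0)) := by
    intro w hw a b
    by_cases h : ∃ i, s(a, b) = s(w, vs i)
    · obtain ⟨i₀, hi₀⟩ := id h
      rw [if_pos h]
      symm
      obtain ⟨ha, hb⟩ | ⟨ha, hb⟩ := Sym2.eq_iff.mp hi₀
      · rw [Finset.sum_eq_single i₀]
        · rw [if_pos ⟨ha, hb⟩, if_neg (fun hc => hw i₀ (ha.symm.trans hc.1))]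
          norm_num
        · intro j _ hj
          rw [if_neg (fun hc => hj (hinj (hb.symm.trans hc.2)).symm),
            if_neg (fun hc => hw j (ha.symm.trans hc.1))]
          norm_num
        · intro hm; exact absurd (Finset.mem_univ i₀) hm
      · rw [Finset.sum_eq_single i₀]
        · rw [if_neg (fun hc => hw i₀ (hc.1.symm.trans ha)), if_pos ⟨ha, hb⟩]
          norm_num
        · intro j _ hj
          rw [if_neg (fun hc => hw i₀ (hc.1.symm.trans ha)),
            if_neg (fun hc => hj (hinj (ha.symm.trans hc.1)).symm)]
          norm_num
        · intro hm; exact absurd (Finset.mem_univ i₀) hm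
    · rw [if_neg h]
      symm
      apply Finset.sum_eq_zero
      intro i _
      rw [if_neg (fun hc => h ⟨i, by rw [hc.1, hc.2]⟩),
        if_neg (fun hc => h ⟨i, by rw [hc.1, hc.2]; exact Sym2.eq_swap⟩)]
      norm_num
  have hquadgen : ∀ (w : V), (∀ i, w ≠ vs i) →
      X ⬝ᵥ ((Matrix.of fun a b =>
          if ∃ i, s(a, b) = s(w, vs i) then (1:ℝ) else 0) *ᵥ X)
        = 2 * (X w * ∑ i, X (vs i)) := by
    intro w hw
    rw [hexp]
    calc (∑ a, ∑ b, X a * ((Matrix.of fun a b =>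
            if ∃ i, s(a, b) = s(w, vs i) then (1:ℝ) else 0) a b * X b))
        = ∑ a, ∑ b, ∑ i, (X a * ((if a = w ∧ b = vs i then (1:ℝ) else 0) * X b)
            + X a * ((if a = vs i ∧ b = w then (1:ℝ) else 0) * X b)) := by
          refine Finset.sum_congr rfl fun a _ => Finset.sum_congr rfl fun b _ => ?_
          rw [Matrix.of_apply, hindsum w hw a b, Finset.sum_mul, Finset.mul_sum]
          refine Finset.sum_congr rfl fun i _ => ?_
          ring
      _ = ∑ i, ∑ a, ∑ b, (X a * ((if a = w ∧ b = vs i then (1:ℝ) else 0) * X b)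
            + X a * ((if a = vs i ∧ b = w then (1:ℝ) else 0) * X b)) := by
          rw [show (∑ a, ∑ b, ∑ i, (X a * ((if a = w ∧ b = vs i then (1:ℝ) else 0) * X b)
            + X a * ((if a = vs i ∧ b = w then (1:ℝ) else 0) * X b)))
            = ∑ a, ∑ i, ∑ b, (X a * ((if a = w ∧ b = vs i then (1:ℝ) else 0) * X b)
            + X a * ((if a = vs i ∧ b = w then (1:ℝ) else 0) * X b)) from
            Finset.sum_congr rfl fun a _ => Finset.sum_comm]
          exact Finset.sum_comm
      _ = ∑ i, (X w * X (vs i) + X (vs i) * X w) := by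
          refine Finset.sum_congr rfl fun i _ => ?_
          rw [show (∑ a, ∑ b, (X a * ((if a = w ∧ b = vs i then (1:ℝ) else 0) * X b)
            + X a * ((if a = vs i ∧ b = w then (1:ℝ) else 0) * X b)))
            = (∑ a, ∑ b, X a * ((if a = w ∧ b = vs i then (1:ℝ) else 0) * X b))
            + (∑ a, ∑ b, X a * ((if a = vs i ∧ b = w then (1:ℝ) else 0) * X b)) from by
            rw [← Finset.sum_add_distrib]
            exact Finset.sum_congr rfl fun a _ => Finset.sum_add_distrib]
          rw [hdouble w (vs i), hdouble (vs i) w]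
      _ = 2 * (X w * ∑ i, X (vs i)) := by
          simp only [Finset.mul_sum]
          exact Finset.sum_congr rfl fun i _ => by ring
  have hQQ : X ⬝ᵥ Q *ᵥ X = 2 * (X u * ∑ i, X (vs i)) := by
    rw [hQ]; exact hquadgen u hune
  have hPP : X ⬝ᵥ P *ᵥ X = 2 * (X v * ∑ i, X (vs i)) := by
    rw [hP]; exact hquadgen v hvne
  -- row computations at v
  have hrowQ : (Q *ᵥ X) v = 0 := by
    have hQv : ∀ b, Q v b = 0 := by
      intro b
      rw [hQ]
      simp only [Matrix.of_apply]
      rw [if_neg]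
      rintro ⟨i, hi⟩
      rcases Sym2.eq_iff.mp hi with ⟨h1, -⟩ | ⟨h1, -⟩
      · exact huv h1.symm
      · exact hvne i h1
    show Q v ⬝ᵥ X = 0
    simp [dotProduct, hQv]
  have hrowP : (P *ᵥ X) v = ∑ i, X (vs i) := by
    have hPv : ∀ b, P v b = (if ∃ i, b = vs i then (1:ℝ) else 0) := by
      intro b
      rw [hP]
      simp only [Matrix.of_apply]
      refine if_congr ?_ rfl rfl
      constructor
      · rintro ⟨i, hi⟩
        rcases Sym2.eq_iff.mp hi with ⟨-, h2⟩ | ⟨h1, -⟩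
        · exact ⟨i, h2⟩
        · exact absurd h1 (hvne i)
      · rintro ⟨i, rfl⟩
        exact ⟨i, rfl⟩
    have hind2 : ∀ b : V, (if ∃ i, b = vs i then (1:ℝ) else 0)
        = ∑ i, if b = vs i then (1:ℝ) else 0 := by
      intro b
      by_cases h : ∃ i, b = vs i
      · obtain ⟨i₀, rfl⟩ := h
        rw [if_pos ⟨i₀, rfl⟩]
        symm
        rw [Finset.sum_eq_single i₀]
        · rw [if_pos rfl]
        · intro j _ hj
          rw [if_neg (fun hc => hj (hinj hc.symm))]
        · intro hm; exact absurd (Finset.mem_univ i₀) hm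
      · rw [if_neg h]
        symm
        exact Finset.sum_eq_zero fun i _ => by rw [if_neg (fun hc => h ⟨i, hc⟩)]
    show P v ⬝ᵥ X = ∑ i, X (vs i)
    calc P v ⬝ᵥ X = ∑ b, (∑ i, if b = vs i then (1:ℝ) else 0) * X b := by
          refine Finset.sum_congr rfl fun b _ => ?_
          rw [hPv b, hind2 b]
      _ = ∑ i, ∑ b, (if b = vs i then (1:ℝ) else 0) * X b := by
          rw [show (∑ b, (∑ i, if b = vs i then (1:ℝ) else 0) * X b)
            = ∑ b, ∑ i, (if b = vs i then (1:ℝ) else 0) * X b from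
            Finset.sum_congr rfl fun b _ => Finset.sum_mul _ _ _]
          exact Finset.sum_comm
      _ = ∑ i, X (vs i) := by
          refine Finset.sum_congr rfl fun i _ => ?_
          simp [ite_mul]
  -- assemble
  have hxx : X ⬝ᵥ X = 1 := by simpa [dotProduct, sq] using hunit
  have hAval : X ⬝ᵥ A *ᵥ X = G.specRad := by
    rw [heig, dotProduct_smul, smul_eq_mul, hxx, mul_one]
  have hermB : B.IsHermitian := by
    rw [Matrix.IsHermitian, hB]
    ext a b
    rw [Matrix.conjTranspose_apply]
    simp only [SimpleGraph.adjMatrix_apply, star_trivial]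
    exact if_congr (Gs.adj_comm b a) rfl rfl
  have hμ : Gs.specRad = sSup (spectrum ℝ B) := by rw [hB]; exact mySpecRadEq Gs
  have hnefs : Nonempty (Fin s) := ⟨i0⟩
  have hSpos : 0 < ∑ i, X (vs i) :=
    Finset.sum_pos (fun i _ => hpos _) Finset.univ_nonempty
  have hBval : X ⬝ᵥ B *ᵥ X
      = G.specRad + 2 * (X u * ∑ i, X (vs i)) - 2 * (X v * ∑ i, X (vs i)) := by
    rw [hBmat, Matrix.sub_mulVec, Matrix.add_mulVec, dotProduct_sub,
      dotProduct_add, hAval, hQQ, hPP]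
  obtain ⟨hray, heqc⟩ := myRayleigh hermB X hunit
  rw [hμ]
  rcases lt_or_eq_of_le hray with h | h
  · calc G.specRad ≤ X ⬝ᵥ B *ᵥ X := by rw [hBval]; nlinarith [hSpos]
      _ < _ := h
  · exfalso
    have hBX := heqc h
    have h1 : (B *ᵥ X) v = sSup (spectrum ℝ B) * X v := by rw [hBX]; simp
    have h2 : (B *ᵥ X) v = G.specRad * X v - ∑ i, X (vs i) := by
      rw [hBmat, Matrix.sub_mulVec, Matrix.add_mulVec]
      simp only [Pi.sub_apply, Pi.add_apply]
      rw [hrowQ, hrowP]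
      have hAv : (A *ᵥ X) v = G.specRad * X v := by rw [heig]; simp
      rw [hAv]; ring
    have hlerho : G.specRad ≤ sSup (spectrum ℝ B) := by
      rw [← h, hBval]; nlinarith [hSpos]
    have hxv := hpos v
    have hmul := mul_le_mul_of_nonneg_right hlerho (le_of_lt hxv)
    have heqv := h1.symm.trans h2
    linarith
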